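/- arXiv:1104.2067 — 2 statements merged into one kernel-verified Lean document; each statement's English description precedes it below -/
import Mathlib

section
/- Let A, B, C be unital C*-algebras and ρ : A ⊗min B → C a unital (contractive) algebra homomorphism whose restriction to 1_A ⊗ B is a *-homomorphism. If q ∈ B is a projection such that 1_B - q is Murray–von Neumann subequivalent to q (i.e. there is a partial isometry s ∈ B with s*s = 1_B - q and ss* ≤ q), then for every x ∈ A ⊗ 1_B one has ‖ρ(x)‖ = ‖ρ(x · (1_A ⊗ q))‖. -/
/-- If `p` and `r` are selfadjoint elements of a C*-algebra with `p * r = 0 = r * p`,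
then `‖p + r‖ ≤ max ‖p‖ ‖r‖`. -/
lemma ortho_selfAdjoint_norm_add_le {E : Type*} [NormedRing E] [StarRing E] [CStarRing E]
    {p r : E} (hp : IsSelfAdjoint p) (hr : IsSelfAdjoint r)
    (hpr : p * r = 0) (hrp : r * p = 0) :
    ‖p + r‖ ≤ max ‖p‖ ‖r‖ := by
  have hsum : IsSelfAdjoint (p + r) := hp.add hr
  set M : ℝ := max ‖p‖ ‖r‖ with hM
  have hM0 : 0 ≤ M := le_trans (norm_nonneg p) (le_max_left _ _)
  -- powers split
  have hpow : ∀ n : ℕ, (p + r) ^ (n + 1) = p ^ (n + 1) + r ^ (n + 1) := by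
    intro n
    induction n with
    | zero => simp
    | succ n ih =>
      have h1 : p ^ (n + 1) * r = 0 := by rw [pow_succ, mul_assoc, hpr, mul_zero]
      have h2 : r ^ (n + 1) * p = 0 := by rw [pow_succ, mul_assoc, hrp, mul_zero]
      rw [pow_succ (p + r), ih, add_mul, mul_add, mul_add, h1, h2,
        ← pow_succ, ← pow_succ]
      abel
  have norm_pow : ∀ {x : E}, IsSelfAdjoint x → ∀ n : ℕ, ‖x ^ 2 ^ n‖ = ‖x‖ ^ 2 ^ n := by
    intro x hx n
    have h := hx.nnnorm_pow_two_pow n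
    calc ‖x ^ 2 ^ n‖ = ((‖x ^ 2 ^ n‖₊ : ℝ)) := (coe_nnnorm _).symm
    _ = ((‖x‖₊ ^ 2 ^ n : NNReal) : ℝ) := by rw [h]
    _ = ‖x‖ ^ 2 ^ n := by push_cast; rfl
  have key : ∀ n : ℕ, ‖p + r‖ ^ 2 ^ n ≤ 2 * M ^ 2 ^ n := by
    intro n
    have h2n : 2 ^ n = (2 ^ n - 1) + 1 := (Nat.sub_add_cancel Nat.one_le_two_pow).symm
    have hsplit : (p + r) ^ 2 ^ n = p ^ 2 ^ n + r ^ 2 ^ n := by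
      rw [h2n]; exact hpow _
    calc ‖p + r‖ ^ 2 ^ n = ‖(p + r) ^ 2 ^ n‖ := (norm_pow hsum n).symm
    _ = ‖p ^ 2 ^ n + r ^ 2 ^ n‖ := by rw [hsplit]
    _ ≤ ‖p ^ 2 ^ n‖ + ‖r ^ 2 ^ n‖ := norm_add_le _ _
    _ = ‖p‖ ^ 2 ^ n + ‖r‖ ^ 2 ^ n := by rw [norm_pow hp, norm_pow hr]
    _ ≤ M ^ 2 ^ n + M ^ 2 ^ n := by
        gcongr <;> [exact le_max_left _ _; exact le_max_right _ _]
    _ = 2 * M ^ 2 ^ n := by ring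
  by_contra hcon
  push_neg at hcon
  have hN0 : 0 < ‖p + r‖ := lt_of_le_of_lt hM0 hcon
  rcases eq_or_lt_of_le hM0 with hM0' | hM0'
  · have := key 0
    simp only [pow_zero, pow_one, ← hM0'] at this
    linarith
  · set c : ℝ := ‖p + r‖ / M with hc
    have hc1 : 1 < c := (one_lt_div hM0').mpr hcon
    obtain ⟨k, hk⟩ := pow_unbounded_of_one_lt (2 : ℝ) hc1
    have hk2 : c ^ k ≤ c ^ 2 ^ k := pow_le_pow_right₀ hc1.le (Nat.lt_two_pow_self (n := k)).le
    have hle : c ^ 2 ^ k ≤ 2 := by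
      rw [hc, div_pow, div_le_iff₀ (by positivity)]
      exact key k
    linarith

/-- Proposition 2.2 of the paper.  Since the minimal tensor product is
not available in Mathlib, the tensor product `A ⊗min B` is encoded by a unital
C*-algebra `T` together with unital *-homomorphisms `ιA : A → T`, `ιB : B → T` with
commuting ranges (the canonical inclusions `a ↦ a ⊗ 1`, `b ↦ 1 ⊗ b`).
Given a unital contractive algebra homomorphism `ρ : T → C` whose restriction to
`1_A ⊗ B` is a *-homomorphism, and a projection `q ∈ B` with `1 - q` Murray–von
Neumann subequivalent to `q`, then for every `x = a ⊗ 1 ∈ A ⊗ 1_B` we have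
`‖ρ x‖ = ‖ρ (x · (1_A ⊗ q))‖`. -/
theorem stmt1 {A B T C : Type*} [CStarAlgebra A] [CStarAlgebra B]
    [PartialOrder B] [StarOrderedRing B] [CStarAlgebra T] [CStarAlgebra C]
    (ιA : A →⋆ₐ[ℂ] T) (ιB : B →⋆ₐ[ℂ] T)
    (hcomm : ∀ a b, ιA a * ιB b = ιB b * ιA a)
    (ρ : T →ₐ[ℂ] C) (hρ_contr : ∀ y : T, ‖ρ y‖ ≤ ‖y‖)
    (hρ_star : ∀ b : B, ρ (ιB (star b)) = star (ρ (ιB b)))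
    (q : B) (hq_proj : IsIdempotentElem q) (hq_sa : star q = q)
    (s : B) (hs : star s * s = 1 - q) (hs' : s * star s ≤ q)
    (a : A) :
    ‖ρ (ιA a)‖ = ‖ρ (ιA a * ιB q)‖ := by
  rw [map_mul]
  -- notation
  set x : C := ρ (ιA a) with hx
  set P : C := ρ (ιB q) with hP
  set u : C := ρ (ιB s) with hu
  set v : C := ρ (ιB (star s)) with hv
  have hq1sa : star ((1 : B) - q) = 1 - q := by rw [star_sub, star_one, hq_sa]
  -- q * s = s
  have hqs : q * s = s := by
    have hconj : (1 - q) * (s * star s) * (1 - q) ≤ (1 - q) * q * (1 - q) := by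
      have := star_left_conjugate_le_conjugate hs' (1 - q)
      rwa [hq1sa] at this
    have hq0 : ((1 : B) - q) * q = 0 := by
      rw [sub_mul, one_mul, hq_proj.eq, sub_self]
    have hzeroR : ((1 : B) - q) * q * (1 - q) = 0 := by rw [hq0, zero_mul]
    have hrewrite : ((1 : B) - q) * (s * star s) * (1 - q)
        = star (star s * (1 - q)) * (star s * (1 - q)) := by
      simp [star_mul, hq1sa, mul_assoc]
    have hnonneg : 0 ≤ ((1 : B) - q) * (s * star s) * (1 - q) := by
      rw [hrewrite]; exact star_mul_self_nonneg _
    have hzero : star (star s * (1 - q)) * (star s * (1 - q)) = 0 := by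
      rw [← hrewrite]
      exact le_antisymm (hzeroR ▸ hconj) hnonneg
    have hsq : star s * (1 - q) = 0 := (CStarRing.star_mul_self_eq_zero_iff _).mp hzero
    have h := congrArg star hsq
    rw [star_mul, hq1sa, star_star, star_zero, sub_mul, one_mul, sub_eq_zero] at h
    exact h.symm
  -- norm bounds in B
  have hnq : ‖q‖ ≤ 1 := by
    have h1 : ‖q‖ * ‖q‖ = ‖q‖ := by
      rw [← CStarRing.norm_star_mul_self, hq_sa, hq_proj.eq]
    nlinarith [norm_nonneg q]
  have hn1q : ‖(1 : B) - q‖ ≤ 1 := by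
    have h1 : ‖(1 : B) - q‖ * ‖(1 : B) - q‖ = ‖(1 : B) - q‖ := by
      rw [← CStarRing.norm_star_mul_self, hq1sa, hq_proj.one_sub.eq]
    nlinarith [norm_nonneg ((1 : B) - q)]
  have hns : ‖s‖ ≤ 1 := by
    have h1 : ‖s‖ * ‖s‖ = ‖(1 : B) - q‖ := by rw [← CStarRing.norm_star_mul_self, hs]
    nlinarith [norm_nonneg s]
  -- norm bounds in C
  have hριB : ∀ b : B, ‖ρ (ιB b)‖ ≤ ‖b‖ := fun b =>
    le_trans (hρ_contr _) (NonUnitalStarAlgHom.norm_apply_le ιB b)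
  have hnP : ‖P‖ ≤ 1 := le_trans (hριB q) hnq
  have hnu : ‖u‖ ≤ 1 := le_trans (hριB s) hns
  have hnv : ‖v‖ ≤ 1 := le_trans (hριB (star s)) (by rwa [norm_star])
  -- algebraic facts in C
  have hmulB : ∀ b b' : B, ρ (ιB b) * ρ (ιB b') = ρ (ιB (b * b')) := fun b b' => by
    rw [← map_mul, ← map_mul]
  have hcommC : ∀ b : B, x * ρ (ιB b) = ρ (ιB b) * x := fun b => by
    rw [hx, ← map_mul, ← map_mul, hcomm, map_mul]
  have hxP : x * P = P * x := hcommC q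
  have hxu : x * u = u * x := hcommC s
  have hxv : x * v = v * x := hcommC (star s)
  have hPsa : star P = P := by rw [hP, ← hρ_star, hq_sa]
  have hPidem : P * P = P := by rw [hP, hmulB, hq_proj.eq]
  have hPu : P * u = u := by rw [hP, hu, hmulB, hqs]
  have hvu : v * u = 1 - P := by
    rw [hv, hu, hmulB, hs, map_sub, map_sub, map_one, map_one, hP]
  -- star x also commutes with P
  have hxsP : star x * P = P * star x := by
    have h := congrArg star hxP
    rw [star_mul, star_mul, hPsa] at h
    exact h.symm
  have hxs1P : star x * (1 - P) = (1 - P) * star x := by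
    rw [mul_sub, sub_mul, mul_one, one_mul, hxsP]
  set w : C := x * star x with hw
  have hwsa : IsSelfAdjoint w := by
    rw [hw, IsSelfAdjoint, star_mul, star_star]
  have hwP : w * P = P * w := by
    rw [hw, mul_assoc, hxsP, ← mul_assoc, hxP, mul_assoc]
  have hw1P : w * (1 - P) = (1 - P) * w := by
    rw [mul_sub, sub_mul, one_mul, mul_one, hwP]
  -- the two orthogonal pieces
  set p : C := w * P with hp
  set r : C := w * (1 - P) with hr
  have hprw : p + r = w := by rw [hp, hr, mul_sub, mul_one]; abel
  have h1Psa : star ((1 : C) - P) = 1 - P := by rw [star_sub, star_one, hPsa]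
  have hpsa : IsSelfAdjoint p := by
    rw [hp, IsSelfAdjoint, star_mul, hPsa, hwsa.star_eq, ← hwP]
  have hrsa : IsSelfAdjoint r := by
    rw [hr, IsSelfAdjoint, star_mul, h1Psa, hwsa.star_eq, ← hw1P]
  have hP1P : P * ((1 : C) - P) = 0 := by rw [mul_sub, mul_one, hPidem, sub_self]
  have h1PP : ((1 : C) - P) * P = 0 := by rw [sub_mul, one_mul, hPidem, sub_self]
  have hProd : p * r = 0 := by
    have h3 : P * (w * (1 - P)) = 0 := by
      rw [← mul_assoc, ← hwP, mul_assoc, hP1P, mul_zero]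
    rw [hp, hr, mul_assoc, h3, mul_zero]
  have hProd' : r * p = 0 := by
    have h3 : ((1 : C) - P) * (w * P) = 0 := by
      rw [← mul_assoc, ← hw1P, mul_assoc, h1PP, mul_zero]
    rw [hr, hp, mul_assoc, h3, mul_zero]
  -- norms of the pieces
  have hnormp : ‖p‖ = ‖x * P‖ * ‖x * P‖ := by
    have heq : (x * P) * star (x * P) = p := by
      rw [star_mul, hPsa]
      calc (x * P) * (P * star x) = x * (P * (P * star x)) := by rw [mul_assoc]
      _ = x * ((P * P) * star x) := by rw [← mul_assoc P P (star x)]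
      _ = x * (P * star x) := by rw [hPidem]
      _ = x * (star x * P) := by rw [hxsP]
      _ = (x * star x) * P := (mul_assoc x (star x) P).symm
      _ = p := by rw [hp, hw]
    rw [← heq, CStarRing.norm_self_mul_star]
  have h1Pidem : ((1 : C) - P) * (1 - P) = 1 - P := by
    rw [sub_mul, one_mul, hP1P, sub_zero]
  have hnormr : ‖r‖ = ‖x * (1 - P)‖ * ‖x * (1 - P)‖ := by
    have heq : (x * (1 - P)) * star (x * (1 - P)) = r := by
      rw [star_mul, h1Psa]
      calc (x * (1 - P)) * ((1 - P) * star x)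
          = x * ((1 - P) * ((1 - P) * star x)) := by rw [mul_assoc]
      _ = x * (((1 - P) * (1 - P)) * star x) := by
            rw [← mul_assoc ((1 : C) - P) ((1 : C) - P) (star x)]
      _ = x * ((1 - P) * star x) := by rw [h1Pidem]
      _ = x * (star x * (1 - P)) := by rw [hxs1P]
      _ = (x * star x) * (1 - P) := (mul_assoc x (star x) _).symm
      _ = r := by rw [hr, hw]
    rw [← heq, CStarRing.norm_self_mul_star]
  -- key estimate : ‖x (1 - P)‖ ≤ ‖x P‖
  have hx1P_bound : ‖x * (1 - P)‖ ≤ ‖x * P‖ := by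
    have heq : x * (1 - P) = v * ((x * P) * u) := by
      calc x * (1 - P) = x * (v * u) := by rw [hvu]
      _ = (x * v) * u := (mul_assoc x v u).symm
      _ = (v * x) * u := by rw [hxv]
      _ = v * (x * u) := mul_assoc v x u
      _ = v * (x * (P * u)) := by rw [hPu]
      _ = v * ((x * P) * u) := by rw [← mul_assoc x P u]
    calc ‖x * (1 - P)‖ = ‖v * ((x * P) * u)‖ := by rw [heq]
    _ ≤ ‖v‖ * ‖(x * P) * u‖ := norm_mul_le _ _
    _ ≤ ‖v‖ * (‖x * P‖ * ‖u‖) := by gcongr; exact norm_mul_le _ _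
    _ ≤ 1 * (‖x * P‖ * 1) := by
        apply mul_le_mul hnv _ (by positivity) zero_le_one
        exact mul_le_mul_of_nonneg_left hnu (norm_nonneg _)
    _ = ‖x * P‖ := by ring
  -- conclude ‖x‖ ≤ ‖x * P‖
  have hle : ‖x‖ ≤ ‖x * P‖ := by
    have hsq : ‖x‖ * ‖x‖ ≤ ‖x * P‖ * ‖x * P‖ := by
      calc ‖x‖ * ‖x‖ = ‖w‖ := by rw [hw, CStarRing.norm_self_mul_star]
      _ = ‖p + r‖ := by rw [hprw]
      _ ≤ max ‖p‖ ‖r‖ := ortho_selfAdjoint_norm_add_le hpsa hrsa hProd hProd'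
      _ ≤ ‖x * P‖ * ‖x * P‖ := by
          apply max_le
          · rw [hnormp]
          · rw [hnormr]
            exact mul_le_mul hx1P_bound hx1P_bound (norm_nonneg _) (norm_nonneg _)
    nlinarith [norm_nonneg x, norm_nonneg (x * P)]
  have hge : ‖x * P‖ ≤ ‖x‖ := by
    calc ‖x * P‖ ≤ ‖x‖ * ‖P‖ := norm_mul_le _ _
    _ ≤ ‖x‖ * 1 := by gcongr
    _ = ‖x‖ := mul_one _
  exact le_antisymm hle hge
end

section
/- Let C be a unital C*-algebra, s ∈ C a partial isometry with s*s = p and ss* ≤ e for projections p, e ∈ C. If x ∈ C commutes with s and with s*, then ‖p x p‖ ≤ ‖e x e‖. -/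
/-- In a unital C*-algebra, if `s` is a partial isometry with
`s* s = p` and `s s* ≤ e` for projections `p, e`, and `x` commutes with `s` and
`s*`, then `‖p x p‖ ≤ ‖e x e‖`. -/
theorem stmt2 {C : Type*} [CStarAlgebra C] [PartialOrder C] [StarOrderedRing C]
    (s p e x : C)
    (hs : s * star s * s = s)
    (hp : star s * s = p) (hp_proj : IsIdempotentElem p) (hp_sa : star p = p)
    (he_proj : IsIdempotentElem e) (he_sa : star e = e)
    (hle : s * star s ≤ e)
    (hxs : x * s = s * x) (hxs' : x * star s = star s * x) :
    ‖p * x * p‖ ≤ ‖e * x * e‖ := by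
  -- Step 1: (1 - e) * s = 0, hence e * s = s and star s * e = star s
  have hzero : star s * (1 - e) = 0 := by
    have hconj : star (1 - e) * (s * star s) * (1 - e) ≤ star (1 - e) * e * (1 - e) :=
      star_left_conjugate_le_conjugate hle (1 - e)
    have hsa1 : star (1 - e) = 1 - e := by simp [he_sa]
    have hrhs : star (1 - e) * e * (1 - e) = 0 := by
      rw [hsa1]
      have : (1 - e) * e = 0 := by
        simp [sub_mul, he_proj.eq]
      rw [this, zero_mul]
    have hform : star (1 - e) * (s * star s) * (1 - e)
        = star (star s * (1 - e)) * (star s * (1 - e)) := by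
      simp only [star_mul, star_star, hsa1]
      noncomm_ring
    have hle0 : star (star s * (1 - e)) * (star s * (1 - e)) ≤ 0 := by
      rw [← hform]; exact hrhs ▸ hconj
    have hge0 : (0 : C) ≤ star (star s * (1 - e)) * (star s * (1 - e)) :=
      star_mul_self_nonneg _
    have : star (star s * (1 - e)) * (star s * (1 - e)) = 0 := le_antisymm hle0 hge0
    exact (CStarRing.star_mul_self_eq_zero_iff _).mp this
  have hse : star s * e = star s := by
    have := hzero
    rw [mul_sub, mul_one, sub_eq_zero] at this
    exact this.symm
  have hes : e * s = s := by
    have := congrArg star hse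
    simpa [star_mul, he_sa] using this
  -- Step 2: p * x * p = star s * (e * x * e) * s
  have key : p * x * p = star s * (e * x * e) * s := by
    rw [← hp]
    calc star s * s * x * (star s * s)
        = star s * (x * s) * (star s * s) := by rw [hxs]; noncomm_ring
      _ = star s * x * (s * star s * s) := by noncomm_ring
      _ = star s * x * s := by rw [hs]
      _ = (star s * e) * x * (e * s) := by rw [hse, hes]
      _ = star s * (e * x * e) * s := by noncomm_ring
  -- Step 3: ‖s‖ ≤ 1
  have hnorm_p : ‖p‖ ≤ 1 := by
    rcases eq_or_ne p 0 with h | h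
    · simp [h]
    · have h2 : ‖p‖ * ‖p‖ = ‖p‖ := by
        rw [← CStarRing.norm_star_mul_self]
        rw [hp_sa, hp_proj.eq]
      nlinarith [norm_pos_iff.mpr h]
  have hnorm_s : ‖s‖ ≤ 1 := by
    have h2 : ‖s‖ * ‖s‖ ≤ 1 := by
      rw [← CStarRing.norm_star_mul_self, hp]; exact hnorm_p
    nlinarith [norm_nonneg s]
  -- Conclude
  rw [key]
  calc ‖star s * (e * x * e) * s‖ ≤ ‖star s * (e * x * e)‖ * ‖s‖ := norm_mul_le _ _
    _ ≤ ‖star s‖ * ‖e * x * e‖ * ‖s‖ := by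
        gcongr
        exact norm_mul_le _ _
    _ ≤ 1 * ‖e * x * e‖ * 1 := by
        have h1 : ‖star s‖ ≤ 1 := by rw [norm_star]; exact hnorm_s
        gcongr <;> first | positivity | exact h1 | exact hnorm_s
    _ = ‖e * x * e‖ := by ring
end
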